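/- arXiv:2109.01434 — 3 statements merged into one kernel-verified Lean document; each statement's English description precedes it below -/
import Mathlib

section
/- Let D ⊂ ℝ³ be bounded measurable with dist(x, D) > 0, f ∈ L²(D) real-valued and bounded, K = (0, k_max], and for k ∈ [-k_max, k_max]\{0} set u^s(x,k) = ∫_D (e^{ik|x-y|}/(4π|x-y|)) f(y) dy. Define N_x : L²(K) → L²(K) by (N_x g)(t) = ∫_K u^s(x, t-s) g(s) ds, P_x : L²(D) → L²(K) by (P_x ψ)(t) = ∫_D e^{it|x-y|} ψ(y) dy, and T_x : L²(D) → L²(D) by (T_x h)(y) = f(y)h(y)/(4π|x-y|). Then N_x = P_x ∘ T_x ∘ P_x*, where P_x* is the adjoint of P_x. -/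
open MeasureTheory Complex

/-- The scattered field `u^s(x,k) = ∫_D e^{ik|x-y|}/(4π|x-y|) f(y) dy`. -/
noncomputable def scatteredField (D : Set (EuclideanSpace ℝ (Fin 3)))
    (f : EuclideanSpace ℝ (Fin 3) → ℝ) (x : EuclideanSpace ℝ (Fin 3)) (k : ℝ) : ℂ :=
  ∫ y in D, Complex.exp (Complex.I * k * dist x y) / (4 * Real.pi * dist x y) * (f y : ℂ)

theorem stmt7 (D : Set (EuclideanSpace ℝ (Fin 3))) (hD : MeasurableSet D)
    (hDb : Bornology.IsBounded D)
    (x : EuclideanSpace ℝ (Fin 3)) (hx : 0 < Metric.infDist x D)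
    (f : EuclideanSpace ℝ (Fin 3) → ℝ) (hfm : Measurable f)
    (hfb : ∃ M, ∀ y ∈ D, |f y| ≤ M)
    (kmax : ℝ) (hk : 0 < kmax)
    (g : ℝ → ℂ) (hg : IntegrableOn g (Set.Ioc 0 kmax))
    (t : ℝ) (ht : t ∈ Set.Ioc (0:ℝ) kmax) :
    (∫ s in Set.Ioc (0:ℝ) kmax, scatteredField D f x (t - s) * g s) =
      ∫ y in D, Complex.exp (Complex.I * t * dist x y) *
        ((f y : ℂ) / (4 * Real.pi * dist x y)) *
        (∫ s in Set.Ioc (0:ℝ) kmax, Complex.exp (-(Complex.I * s * dist x y)) * g s) := by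
  obtain ⟨M, hM⟩ := hfb
  set r := Metric.infDist x D with hr
  set μ := volume.restrict (Set.Ioc (0:ℝ) kmax)
  set ν := volume.restrict D
  have hD' : volume D < ⊤ := hDb.measure_lt_top
  have hrd : ∀ y ∈ D, r ≤ dist x y := fun y hy => Metric.infDist_le_dist_of_mem hy
  have hpi : (0:ℝ) < 4 * Real.pi := by positivity
  set C : ℝ := max M 0 / (4 * Real.pi * r) with hC
  -- pointwise bound on the kernel
  have hbound : ∀ (k : ℝ), ∀ y ∈ D,
      ‖Complex.exp (Complex.I * k * dist x y) / (4 * Real.pi * dist x y) * (f y : ℂ)‖ ≤ C := by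
    intro k y hy
    have hd : 0 < dist x y := lt_of_lt_of_le hx (hrd y hy)
    have habs : ‖Complex.exp (Complex.I * k * dist x y)‖ = 1 := by
      rw [Complex.norm_exp]
      simp [Complex.add_re, Complex.mul_re]
    rw [norm_mul, norm_div, habs]
    have h1 : ‖(4 * Real.pi * dist x y : ℂ)‖ = 4 * Real.pi * dist x y := by
      have : ((4 * Real.pi * dist x y : ℝ) : ℂ) = 4 * Real.pi * dist x y := by push_cast; ring
      rw [← this, Complex.norm_real, Real.norm_of_nonneg (by positivity)]
    have h2 : ‖((f y : ℝ) : ℂ)‖ = |f y| := by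
      rw [Complex.norm_real, Real.norm_eq_abs]
    rw [h1, h2, hC, div_mul_eq_mul_div, one_mul]
    exact div_le_div₀ (le_max_right M 0) (le_trans (hM y hy) (le_max_left _ _))
      (by positivity) (mul_le_mul_of_nonneg_left (hrd y hy) hpi.le)
  -- the uncurried integrand
  set F : ℝ × (EuclideanSpace ℝ (Fin 3)) → ℂ := fun p =>
    Complex.exp (Complex.I * (t - p.1) * dist x p.2) / (4 * Real.pi * dist x p.2) * (f p.2 : ℂ) * g p.1
    with hF
  have hmeas : AEStronglyMeasurable F (μ.prod ν) := by
    apply AEStronglyMeasurable.mul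
    · apply Measurable.aestronglyMeasurable
      have m1 : Measurable fun p : ℝ × (EuclideanSpace ℝ (Fin 3)) => ((dist x p.2 : ℝ) : ℂ) :=
        Complex.measurable_ofReal.comp (measurable_const.dist measurable_snd)
      have m2 : Measurable fun p : ℝ × (EuclideanSpace ℝ (Fin 3)) => ((p.1 : ℝ) : ℂ) :=
        Complex.measurable_ofReal.comp measurable_fst
      have m3 : Measurable fun p : ℝ × (EuclideanSpace ℝ (Fin 3)) => ((f p.2 : ℝ) : ℂ) :=
        Complex.measurable_ofReal.comp (hfm.comp measurable_snd)
      exact ((Complex.measurable_exp.comp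
          ((measurable_const.mul (measurable_const.sub m2)).mul m1)).div
          (measurable_const.mul m1)).mul m3
    · exact hg.aestronglyMeasurable.comp_quasiMeasurePreserving
        Measure.quasiMeasurePreserving_fst
  have hmemD : ∀ᵐ p ∂(μ.prod ν), p.2 ∈ D := by
    have h2 : ∀ᵐ y ∂ν, y ∈ D := ae_restrict_mem hD
    exact Measure.quasiMeasurePreserving_snd.ae h2
  have hint : Integrable F (μ.prod ν) := by
    have hdom : Integrable (fun p : ℝ × (EuclideanSpace ℝ (Fin 3)) => C * ‖g p.1‖) (μ.prod ν) := by
      have : IsFiniteMeasure ν := by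
        constructor
        rw [Measure.restrict_apply_univ]
        exact hD'
      have h2 : Integrable (fun _ : EuclideanSpace ℝ (Fin 3) => (1:ℝ)) ν := integrable_const 1
      have := Integrable.mul_prod (hg.norm.const_mul C) h2
      simpa using this
    apply hdom.mono' hmeas
    filter_upwards [hmemD] with p hp
    rw [hF]
    simp only
    rw [norm_mul]
    have hb := hbound (t - p.1) p.2 hp
    push_cast at hb
    exact mul_le_mul_of_nonneg_right hb (norm_nonneg _)
  -- now compute
  have step1 : (∫ s in Set.Ioc (0:ℝ) kmax, scatteredField D f x (t - s) * g s) =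
      ∫ s, (∫ y, F (s, y) ∂ν) ∂μ := by
    apply integral_congr_ae
    filter_upwards with s
    rw [scatteredField, ← integral_mul_const]
    apply integral_congr_ae
    filter_upwards with y
    rw [hF]
    push_cast
    ring_nf
  rw [step1, integral_integral_swap hint]
  apply integral_congr_ae
  filter_upwards with y
  rw [← integral_const_mul]
  apply integral_congr_ae
  filter_upwards with s
  rw [hF]
  simp only
  rw [show Complex.I * ((t:ℂ) - (s:ℂ)) * ((dist x y : ℝ) : ℂ)
      = Complex.I * t * dist x y + -(Complex.I * s * dist x y) from by ring,
    Complex.exp_add]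
  ring
end

section
/- Under the factorization N_x = P_x T_x P_x* of the multi-frequency near field operator, with f real-valued satisfying c_f ≤ f ≤ C_f a.e. on D (0 < c_f < C_f), the inequality (c_f/(4π r₂)) ‖P_x* g‖²_{L²(D)} ≤ |⟨N_x g, g⟩_{L²(K)}| ≤ (C_f/(4π r₁)) ‖P_x* g‖²_{L²(D)} holds for all g ∈ L²(K), where r₁ = inf{|x-y| : y ∈ D} > 0 and r₂ = sup{|x-y| : y ∈ D} < ∞. -/
open MeasureTheory Complex

/-- The operator `P_x^*` applied to `g`: `(P_x^* g)(y) = ∫_K e^{-is|x-y|} g(s) ds`. -/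
noncomputable def Pstar (x : EuclideanSpace ℝ (Fin 3)) (kmax : ℝ) (g : ℝ → ℂ)
    (y : EuclideanSpace ℝ (Fin 3)) : ℂ :=
  ∫ s in Set.Ioc (0:ℝ) kmax, Complex.exp (-(Complex.I * s * dist x y)) * g s

/-- The multi-frequency near field operator applied to `g`:
`(N_x g)(t) = ∫_K u^s(x, t-s) g(s) ds`. -/
noncomputable def Nop (D : Set (EuclideanSpace ℝ (Fin 3)))
    (f : EuclideanSpace ℝ (Fin 3) → ℝ) (x : EuclideanSpace ℝ (Fin 3)) (kmax : ℝ)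
    (g : ℝ → ℂ) (t : ℝ) : ℂ :=
  ∫ s in Set.Ioc (0:ℝ) kmax, scatteredField D f x (t - s) * g s

lemma normExpI (a b : ℝ) : ‖Complex.exp (Complex.I * a * b)‖ = 1 := by
  rw [Complex.norm_exp]; simp

lemma normExpnegI (a b : ℝ) : ‖Complex.exp (-(Complex.I * a * b))‖ = 1 := by
  rw [Complex.norm_exp]; simp

lemma Pstar_cont (x : EuclideanSpace ℝ (Fin 3)) (kmax : ℝ) (g : ℝ → ℂ)
    (hg : IntegrableOn g (Set.Ioc 0 kmax)) : Continuous (Pstar x kmax g) := by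
  apply continuous_of_dominated (bound := fun s => ‖g s‖)
  · intro y
    refine (Complex.continuous_exp.comp ?_).aestronglyMeasurable.mul hg.1
    exact ((continuous_const.mul Complex.continuous_ofReal).mul continuous_const).neg
  · intro y
    refine Filter.Eventually.of_forall fun s => ?_
    show ‖Complex.exp (-(Complex.I * s * dist x y)) * g s‖ ≤ ‖g s‖
    exact le_of_eq (by rw [norm_mul, normExpnegI, one_mul])
  · exact hg.norm
  · exact Filter.Eventually.of_forall fun s => by
      apply Continuous.mul _ continuous_const
      refine Complex.continuous_exp.comp ?_
      exact ((continuous_const.mul (Complex.continuous_ofReal.comp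
        (continuous_const.dist continuous_id)))).neg

lemma Pstar_bound (x : EuclideanSpace ℝ (Fin 3)) (kmax : ℝ) (g : ℝ → ℂ)
    (y : EuclideanSpace ℝ (Fin 3)) :
    ‖Pstar x kmax g y‖ ≤ ∫ s in Set.Ioc (0:ℝ) kmax, ‖g s‖ := by
  refine le_trans (norm_integral_le_integral_norm _) (le_of_eq ?_)
  refine integral_congr_ae (Filter.Eventually.of_forall fun s => ?_)
  show ‖Complex.exp (-(Complex.I * s * dist x y)) * g s‖ = ‖g s‖
  rw [norm_mul, normExpnegI, one_mul]

lemma key (D : Set (EuclideanSpace ℝ (Fin 3))) (hD : MeasurableSet D)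
    (hDb : Bornology.IsBounded D)
    (x : EuclideanSpace ℝ (Fin 3)) (f f' : EuclideanSpace ℝ (Fin 3) → ℝ)
    (hf'm : Measurable f')
    (hff' : ∀ᵐ y ∂(volume.restrict D), f y = f' y)
    (C : ℝ) (hC0 : 0 ≤ C)
    (hC : ∀ y ∈ D, |f' y| / (4 * Real.pi * dist x y) ≤ C)
    (kmax : ℝ) (g : ℝ → ℂ) (hg : IntegrableOn g (Set.Ioc 0 kmax)) :
    ∫ t in Set.Ioc (0:ℝ) kmax, Nop D f x kmax g t * (starRingEnd ℂ) (g t)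
      = ((∫ y in D, f' y / (4 * Real.pi * dist x y) * ‖Pstar x kmax g y‖^2 : ℝ) : ℂ) := by
  have hπ := Real.pi_pos
  haveI : IsFiniteMeasure (volume.restrict D) :=
    ⟨by rw [Measure.restrict_apply_univ]; exact hDb.measure_lt_top⟩
  have hdm : Measurable fun p : ℝ × EuclideanSpace ℝ (Fin 3) => ((dist x p.2 : ℝ) : ℂ) :=
    Complex.measurable_ofReal.comp
      ((continuous_const.dist continuous_id).measurable.comp measurable_snd)
  have hgc : IntegrableOn (fun t => (starRingEnd ℂ) (g t)) (Set.Ioc (0:ℝ) kmax) := by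
    refine hg.norm.mono' (Complex.continuous_conj.comp_aestronglyMeasurable hg.1) ?_
    exact Filter.Eventually.of_forall fun t => by simp
  have hnormc : ∀ y ∈ D, ‖(f' y : ℂ) / (4 * Real.pi * dist x y)‖ ≤ C := by
    intro y hy
    have hcast : ((4:ℂ) * Real.pi * dist x y) = ((4 * Real.pi * dist x y : ℝ) : ℂ) := by
      push_cast; ring
    rw [norm_div, hcast, Complex.norm_real, Complex.norm_real, Real.norm_eq_abs,
      Real.norm_eq_abs, _root_.abs_of_nonneg (by positivity : (0:ℝ) ≤ 4 * Real.pi * dist x y)]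
    exact hC y hy
  have intAux : ∀ (g₂ : ℝ → ℂ), IntegrableOn g₂ (Set.Ioc (0:ℝ) kmax) →
      ∀ (C' : ℝ) (A : ℝ × EuclideanSpace ℝ (Fin 3) → ℂ),
      AEStronglyMeasurable A
        ((volume.restrict (Set.Ioc (0:ℝ) kmax)).prod (volume.restrict D)) →
      (∀ p : ℝ × EuclideanSpace ℝ (Fin 3), p.2 ∈ D → ‖A p‖ ≤ C') →
      Integrable (fun p : ℝ × EuclideanSpace ℝ (Fin 3) => A p * g₂ p.1)
        ((volume.restrict (Set.Ioc (0:ℝ) kmax)).prod (volume.restrict D)) := by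
    intro g₂ hg₂ C' A hA hbd
    have hb : Integrable (fun p : ℝ × EuclideanSpace ℝ (Fin 3) => C' * ‖g₂ p.1‖)
        ((volume.restrict (Set.Ioc (0:ℝ) kmax)).prod (volume.restrict D)) := by
      have h1 := (hg₂.norm.const_mul C').mul_prod (integrable_const (1:ℝ) (μ := volume.restrict D))
      simpa using h1
    refine hb.mono' (hA.mul (hg₂.1.comp_fst)) ?_
    have hmem : ∀ᵐ p ∂((volume.restrict (Set.Ioc (0:ℝ) kmax)).prod (volume.restrict D)),
        p ∈ (Set.Ioc (0:ℝ) kmax) ×ˢ D := by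
      rw [Measure.prod_restrict]
      exact ae_restrict_mem (measurableSet_Ioc.prod hD)
    filter_upwards [hmem] with p hp
    rw [norm_mul]
    exact mul_le_mul_of_nonneg_right (hbd p hp.2) (norm_nonneg _)
  have hsf : ∀ k : ℝ, scatteredField D f x k
      = ∫ y in D, Complex.exp (Complex.I * k * dist x y)
          * ((f' y : ℂ) / (4 * Real.pi * dist x y)) := by
    intro k
    unfold scatteredField
    refine integral_congr_ae ?_
    filter_upwards [hff'] with y hy
    rw [hy]; ring
  have hE1 : ∀ a : ℝ, Measurable fun p : ℝ × EuclideanSpace ℝ (Fin 3) =>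
      Complex.exp (Complex.I * a * dist x p.2) :=
    fun a => Complex.measurable_exp.comp (measurable_const.mul hdm)
  have hE2 : Measurable fun p : ℝ × EuclideanSpace ℝ (Fin 3) =>
      Complex.exp (-(Complex.I * p.1 * dist x p.2)) :=
    Complex.measurable_exp.comp
      (((measurable_const.mul (Complex.measurable_ofReal.comp measurable_fst)).mul hdm).neg)
  have hE3 : Measurable fun p : ℝ × EuclideanSpace ℝ (Fin 3) =>
      Complex.exp (Complex.I * p.1 * dist x p.2) :=
    Complex.measurable_exp.comp
      ((measurable_const.mul (Complex.measurable_ofReal.comp measurable_fst)).mul hdm)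
  have hcm : Measurable fun p : ℝ × EuclideanSpace ℝ (Fin 3) =>
      (f' p.2 : ℂ) / (4 * Real.pi * dist x p.2) :=
    (Complex.measurable_ofReal.comp (hf'm.comp measurable_snd)).div (measurable_const.mul hdm)
  have hPm : Measurable fun p : ℝ × EuclideanSpace ℝ (Fin 3) => Pstar x kmax g p.2 :=
    (Pstar_cont x kmax g hg).measurable.comp measurable_snd
  have int1 : ∀ t : ℝ, Integrable (Function.uncurry fun (s : ℝ) (y : EuclideanSpace ℝ (Fin 3)) =>
      ((Complex.exp (Complex.I * t * dist x y) * ((f' y : ℂ) / (4 * Real.pi * dist x y)))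
        * Complex.exp (-(Complex.I * s * dist x y))) * g s)
      ((volume.restrict (Set.Ioc (0:ℝ) kmax)).prod (volume.restrict D)) := by
    intro t
    have h := intAux g hg C
      (fun p => (Complex.exp (Complex.I * t * dist x p.2)
          * ((f' p.2 : ℂ) / (4 * Real.pi * dist x p.2)))
        * Complex.exp (-(Complex.I * p.1 * dist x p.2)))
      ((((hE1 t).mul hcm).mul hE2).aestronglyMeasurable)
      (fun p hp => by
        rw [norm_mul, norm_mul, normExpI, normExpnegI, one_mul, mul_one]
        exact hnormc p.2 hp)
    exact h
  have hNop : ∀ t : ℝ, Nop D f x kmax g t = ∫ y in D,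
      (Complex.exp (Complex.I * t * dist x y) * ((f' y : ℂ) / (4 * Real.pi * dist x y)))
        * Pstar x kmax g y := by
    intro t
    unfold Nop
    calc (∫ s in Set.Ioc (0:ℝ) kmax, scatteredField D f x (t - s) * g s)
        = ∫ s in Set.Ioc (0:ℝ) kmax, ∫ y in D,
            ((Complex.exp (Complex.I * t * dist x y) * ((f' y : ℂ) / (4 * Real.pi * dist x y)))
              * Complex.exp (-(Complex.I * s * dist x y))) * g s := by
          refine integral_congr_ae (Filter.Eventually.of_forall fun s => ?_)
          show scatteredField D f x (t - s) * g s = _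
          rw [hsf (t - s), ← integral_mul_const]
          refine integral_congr_ae (Filter.Eventually.of_forall fun y => ?_)
          show Complex.exp (Complex.I * ((t - s : ℝ) : ℂ) * dist x y)
              * ((f' y : ℂ) / (4 * Real.pi * dist x y)) * g s = _
          have hsplit : Complex.I * ((t - s : ℝ) : ℂ) * (dist x y : ℂ)
              = Complex.I * t * dist x y + -(Complex.I * s * dist x y) := by push_cast; ring
          rw [hsplit, Complex.exp_add]; ring
      _ = ∫ y in D, ∫ s in Set.Ioc (0:ℝ) kmax,
            ((Complex.exp (Complex.I * t * dist x y) * ((f' y : ℂ) / (4 * Real.pi * dist x y)))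
              * Complex.exp (-(Complex.I * s * dist x y))) * g s :=
          integral_integral_swap (int1 t)
      _ = _ := by
          refine integral_congr_ae (Filter.Eventually.of_forall fun y => ?_)
          show _ = (Complex.exp (Complex.I * t * dist x y)
              * ((f' y : ℂ) / (4 * Real.pi * dist x y))) * Pstar x kmax g y
          rw [show (Pstar x kmax g y)
              = ∫ s in Set.Ioc (0:ℝ) kmax, Complex.exp (-(Complex.I * s * dist x y)) * g s
              from rfl, ← integral_const_mul]
          refine integral_congr_ae (Filter.Eventually.of_forall fun s => ?_)
          show ((Complex.exp (Complex.I * t * dist x y)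
              * ((f' y : ℂ) / (4 * Real.pi * dist x y)))
              * Complex.exp (-(Complex.I * s * dist x y))) * g s = _
          ring
  set Mg : ℝ := ∫ s in Set.Ioc (0:ℝ) kmax, ‖g s‖ with hMgdef
  have int2 : Integrable (Function.uncurry fun (t : ℝ) (y : EuclideanSpace ℝ (Fin 3)) =>
      ((((f' y : ℂ) / (4 * Real.pi * dist x y)) * Pstar x kmax g y)
        * Complex.exp (Complex.I * t * dist x y)) * (starRingEnd ℂ) (g t))
      ((volume.restrict (Set.Ioc (0:ℝ) kmax)).prod (volume.restrict D)) := by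
    have h := intAux (fun t => (starRingEnd ℂ) (g t)) hgc (C * Mg)
      (fun p => (((f' p.2 : ℂ) / (4 * Real.pi * dist x p.2)) * Pstar x kmax g p.2)
        * Complex.exp (Complex.I * p.1 * dist x p.2))
      (((hcm.mul hPm).mul hE3).aestronglyMeasurable)
      (fun p hp => by
        rw [norm_mul, normExpI, mul_one, norm_mul]
        exact mul_le_mul (hnormc p.2 hp) (Pstar_bound x kmax g p.2) (norm_nonneg _) hC0)
    exact h
  calc ∫ t in Set.Ioc (0:ℝ) kmax, Nop D f x kmax g t * (starRingEnd ℂ) (g t)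
      = ∫ t in Set.Ioc (0:ℝ) kmax, ∫ y in D,
          ((((f' y : ℂ) / (4 * Real.pi * dist x y)) * Pstar x kmax g y)
            * Complex.exp (Complex.I * t * dist x y)) * (starRingEnd ℂ) (g t) := by
        refine integral_congr_ae (Filter.Eventually.of_forall fun t => ?_)
        show Nop D f x kmax g t * (starRingEnd ℂ) (g t) = _
        rw [hNop t, ← integral_mul_const]
        refine integral_congr_ae (Filter.Eventually.of_forall fun y => ?_)
        show (Complex.exp (Complex.I * t * dist x y)
            * ((f' y : ℂ) / (4 * Real.pi * dist x y))) * Pstar x kmax g y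
            * (starRingEnd ℂ) (g t) = _
        ring
    _ = ∫ y in D, ∫ t in Set.Ioc (0:ℝ) kmax,
          ((((f' y : ℂ) / (4 * Real.pi * dist x y)) * Pstar x kmax g y)
            * Complex.exp (Complex.I * t * dist x y)) * (starRingEnd ℂ) (g t) :=
        integral_integral_swap int2
    _ = ∫ y in D, (((f' y : ℂ) / (4 * Real.pi * dist x y)) * Pstar x kmax g y)
          * (starRingEnd ℂ) (Pstar x kmax g y) := by
        refine integral_congr_ae (Filter.Eventually.of_forall fun y => ?_)
        show _ = (((f' y : ℂ) / (4 * Real.pi * dist x y)) * Pstar x kmax g y)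
            * (starRingEnd ℂ) (Pstar x kmax g y)
        have h1 : ∀ t : ℝ, ((((f' y : ℂ) / (4 * Real.pi * dist x y)) * Pstar x kmax g y)
              * Complex.exp (Complex.I * t * dist x y)) * (starRingEnd ℂ) (g t)
            = (((f' y : ℂ) / (4 * Real.pi * dist x y)) * Pstar x kmax g y)
              * (starRingEnd ℂ) (Complex.exp (-(Complex.I * t * dist x y)) * g t) := by
          intro t
          rw [map_mul]
          have h2 : (starRingEnd ℂ) (Complex.exp (-(Complex.I * t * dist x y)))
              = Complex.exp (Complex.I * t * dist x y) := by
            rw [← Complex.exp_conj]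
            congr 1
            simp [map_neg, map_mul, Complex.conj_I, Complex.conj_ofReal]
          rw [h2]; ring
        simp_rw [h1]
        rw [integral_const_mul, integral_conj]
        rfl
    _ = ∫ y in D, ((f' y / (4 * Real.pi * dist x y) * ‖Pstar x kmax g y‖^2 : ℝ) : ℂ) := by
        refine integral_congr_ae (Filter.Eventually.of_forall fun y => ?_)
        show (((f' y : ℂ) / (4 * Real.pi * dist x y)) * Pstar x kmax g y)
            * (starRingEnd ℂ) (Pstar x kmax g y) = _
        rw [mul_assoc, Complex.mul_conj, Complex.normSq_eq_norm_sq]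
        push_cast
        ring
    _ = _ := integral_ofReal

theorem stmt8 (D : Set (EuclideanSpace ℝ (Fin 3))) (hD : MeasurableSet D)
    (hDb : Bornology.IsBounded D)
    (x : EuclideanSpace ℝ (Fin 3)) (hx : 0 < Metric.infDist x D)
    (f : EuclideanSpace ℝ (Fin 3) → ℝ) (hfm : Measurable f)
    (c_f C_f : ℝ) (hc : 0 < c_f) (hcC : c_f < C_f)
    (hf : ∀ᵐ y ∂(volume.restrict D), c_f ≤ f y ∧ f y ≤ C_f)
    (r₁ r₂ : ℝ) (hr₁ : r₁ = sInf ((fun y => dist x y) '' D))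
    (hr₂ : r₂ = sSup ((fun y => dist x y) '' D)) (hr₁pos : 0 < r₁)
    (kmax : ℝ) (hk : 0 < kmax)
    (g : ℝ → ℂ) (hg : IntegrableOn g (Set.Ioc 0 kmax))
    (hPg : IntegrableOn (fun y => ‖Pstar x kmax g y‖^2) D) :
    c_f / (4 * Real.pi * r₂) * (∫ y in D, ‖Pstar x kmax g y‖^2) ≤
        ‖(∫ t in Set.Ioc (0:ℝ) kmax,
          Nop D f x kmax g t * (starRingEnd ℂ) (g t))‖ ∧
      ‖(∫ t in Set.Ioc (0:ℝ) kmax,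
          Nop D f x kmax g t * (starRingEnd ℂ) (g t))‖ ≤
        C_f / (4 * Real.pi * r₁) * (∫ y in D, ‖Pstar x kmax g y‖^2) := by
  have hπ := Real.pi_pos
  -- D is nonempty
  have hDne : D.Nonempty := by
    by_contra hne
    rw [Set.not_nonempty_iff_eq_empty] at hne
    rw [hne] at hr₁
    simp [Real.sInf_empty] at hr₁
    exact absurd (hr₁ ▸ hr₁pos) (lt_irrefl 0)
  obtain ⟨R, hR⟩ := hDb.subset_closedBall x
  have hbdd : BddAbove ((fun y => dist x y) '' D) := by
    refine ⟨R, fun r hr => ?_⟩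
    obtain ⟨y, hy, rfl⟩ := hr
    simpa [dist_comm] using hR hy
  have hd1 : ∀ y ∈ D, r₁ ≤ dist x y := by
    intro y hy
    rw [hr₁]
    exact csInf_le ⟨0, fun r hr => by obtain ⟨y, hy, rfl⟩ := hr; exact dist_nonneg⟩ ⟨y, hy, rfl⟩
  have hd2 : ∀ y ∈ D, dist x y ≤ r₂ := by
    intro y hy
    rw [hr₂]
    exact le_csSup hbdd ⟨y, hy, rfl⟩
  obtain ⟨y₀, hy₀⟩ := hDne
  have hr₂pos : 0 < r₂ := lt_of_lt_of_le hr₁pos (le_trans (hd1 y₀ hy₀) (hd2 y₀ hy₀))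
  -- the clamped contrast
  set f' : EuclideanSpace ℝ (Fin 3) → ℝ := fun y => max c_f (min (f y) C_f) with hf'def
  have hf'm : Measurable f' := measurable_const.max (hfm.min measurable_const)
  have hf'1 : ∀ y, c_f ≤ f' y := fun y => le_max_left _ _
  have hf'2 : ∀ y, f' y ≤ C_f := fun y =>
    max_le (le_of_lt hcC) (min_le_right _ _)
  have hf'pos : ∀ y, 0 < f' y := fun y => lt_of_lt_of_le hc (hf'1 y)
  have hff' : ∀ᵐ y ∂(volume.restrict D), f y = f' y := by
    filter_upwards [hf] with y hy
    rw [hf'def]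
    simp only
    rw [min_eq_left hy.2, max_eq_right hy.1]
  have hub : ∀ y ∈ D, f' y / (4 * Real.pi * dist x y) ≤ C_f / (4 * Real.pi * r₁) := by
    intro y hy
    exact div_le_div₀ (hc.trans hcC).le (hf'2 y) (by positivity)
      (by nlinarith [hd1 y hy])
  have hlb : ∀ y ∈ D, c_f / (4 * Real.pi * r₂) ≤ f' y / (4 * Real.pi * dist x y) := by
    intro y hy
    have hdpos : 0 < dist x y := lt_of_lt_of_le hr₁pos (hd1 y hy)
    exact div_le_div₀ (le_of_lt (hf'pos y)) (hf'1 y) (mul_pos (by positivity) hdpos)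
      (by nlinarith [hd2 y hy])
  have hkey := key D hD hDb x f f' hf'm hff' (C_f / (4 * Real.pi * r₁)) (div_nonneg (hc.trans hcC).le (by positivity))
    (fun y hy => by
      rw [abs_of_pos (hf'pos y)]
      exact hub y hy) kmax g hg
  set r : ℝ := ∫ y in D, f' y / (4 * Real.pi * dist x y) * ‖Pstar x kmax g y‖^2 with hrdef
  have habs : ‖(∫ t in Set.Ioc (0:ℝ) kmax,
      Nop D f x kmax g t * (starRingEnd ℂ) (g t))‖ = r := by
    rw [hkey, Complex.norm_real, Real.norm_eq_abs, _root_.abs_of_nonneg]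
    apply integral_nonneg
    intro y
    have h0 : 0 ≤ f' y / (4 * Real.pi * dist x y) :=
      div_nonneg (le_of_lt (hf'pos y)) (by positivity)
    exact mul_nonneg h0 (sq_nonneg _)
  rw [habs]
  -- integrability of the integrand
  have hq : IntegrableOn (fun y => f' y / (4 * Real.pi * dist x y) * ‖Pstar x kmax g y‖^2) D := by
    apply Integrable.mono' (g := fun y => C_f / (4 * Real.pi * r₁) * ‖Pstar x kmax g y‖^2)
      (hPg.const_mul _)
    · apply AEStronglyMeasurable.mul _ (((Pstar_cont x kmax g hg).norm.pow 2).aestronglyMeasurable.restrict)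
      apply Measurable.aestronglyMeasurable
      exact hf'm.div ((continuous_const.mul (continuous_const.dist continuous_id).snd').measurable.comp
        (measurable_id.prodMk measurable_id)) |>.comp measurable_id |>.comp measurable_id
    · filter_upwards [ae_restrict_mem hD] with y hy
      rw [Real.norm_eq_abs, abs_mul,
        _root_.abs_of_nonneg (by positivity : (0:ℝ) ≤ ‖Pstar x kmax g y‖^2),
        _root_.abs_of_nonneg (div_nonneg (le_of_lt (hf'pos y)) (by positivity))]
      exact mul_le_mul_of_nonneg_right (hub y hy) (by positivity)
  constructor
  · calc c_f / (4 * Real.pi * r₂) * (∫ y in D, ‖Pstar x kmax g y‖^2)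
        = ∫ y in D, c_f / (4 * Real.pi * r₂) * ‖Pstar x kmax g y‖^2 := by
          rw [← integral_const_mul]
      _ ≤ r := by
          apply integral_mono_ae (hPg.const_mul _) hq
          filter_upwards [ae_restrict_mem hD] with y hy
          exact mul_le_mul_of_nonneg_right (hlb y hy) (by positivity)
  · calc r ≤ ∫ y in D, C_f / (4 * Real.pi * r₁) * ‖Pstar x kmax g y‖^2 := by
          apply integral_mono_ae hq (hPg.const_mul _)
          filter_upwards [ae_restrict_mem hD] with y hy
          exact mul_le_mul_of_nonneg_right (hub y hy) (by positivity)
      _ = C_f / (4 * Real.pi * r₁) * (∫ y in D, ‖Pstar x kmax g y‖^2) := by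
          rw [← integral_const_mul]
end

section
/- Let D ⊂ ℝ³ be bounded measurable, f ∈ L∞(D), K = (0, k_max], x̂ a unit vector. For k ∈ [-k_max,k_max] define u^∞(x̂,k) = ∫_D e^{-ik x̂·y} f(y) dy. Define F_{x̂} : L²(K) → L²(K) by (F_{x̂} φ)(t) = ∫_K u^∞(x̂, t-s) φ(s) ds, Q_{x̂} : L²(D) → L²(K) by (Q_{x̂} ψ)(t) = ∫_D e^{-it x̂·y} ψ(y) dy, and T_{x̂} : L²(D) → L²(D) by T_{x̂} g = f g. Then F_{x̂} = Q_{x̂} ∘ T_{x̂} ∘ Q_{x̂}*, where the adjoint satisfies (Q_{x̂}* φ)(y) = ∫_K e^{is x̂·y} φ(s) ds. -/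
open MeasureTheory Complex RealInnerProductSpace

theorem stmt11 (D : Set (EuclideanSpace ℝ (Fin 3))) (hD : MeasurableSet D)
    (hDb : Bornology.IsBounded D)
    (f : EuclideanSpace ℝ (Fin 3) → ℂ) (hfm : Measurable f)
    (hfb : ∃ M, ∀ y ∈ D, ‖f y‖ ≤ M)
    (xhat : EuclideanSpace ℝ (Fin 3)) (hxhat : ‖xhat‖ = 1)
    (kmax : ℝ) (hk : 0 < kmax)
    (φ : ℝ → ℂ) (hφ : IntegrableOn φ (Set.Ioc 0 kmax))
    (t : ℝ) (ht : t ∈ Set.Ioc (0:ℝ) kmax) :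
    (∫ s in Set.Ioc (0:ℝ) kmax,
        (∫ y in D, Complex.exp (-(Complex.I * (t - s) * (⟪xhat, y⟫ : ℝ))) * f y) * φ s) =
      ∫ y in D, Complex.exp (-(Complex.I * t * (⟪xhat, y⟫ : ℝ))) * f y *
        (∫ s in Set.Ioc (0:ℝ) kmax, Complex.exp (Complex.I * s * (⟪xhat, y⟫ : ℝ)) * φ s) := by
  obtain ⟨M, hM⟩ := hfb
  set μ : Measure ℝ := volume.restrict (Set.Ioc 0 kmax) with hμ
  set ν : Measure (EuclideanSpace ℝ (Fin 3)) := volume.restrict D with hν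
  have hinner : Measurable fun y : EuclideanSpace ℝ (Fin 3) => (⟪xhat, y⟫ : ℝ) :=
    (continuous_const.inner continuous_id).measurable
  -- the integrand on the product space
  set F : ℝ × EuclideanSpace ℝ (Fin 3) → ℂ := fun p =>
    Complex.exp (-(Complex.I * (t - p.1) * (⟪xhat, p.2⟫ : ℝ))) * f p.2 * φ p.1 with hF
  have hFmeas : AEStronglyMeasurable F (μ.prod ν) := by
    apply AEStronglyMeasurable.mul
    · apply AEStronglyMeasurable.mul
      · apply Measurable.aestronglyMeasurable
        exact Complex.measurable_exp.comp <| by fun_prop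
      · exact (hfm.comp measurable_snd).aestronglyMeasurable
    · exact hφ.1.comp_quasiMeasurePreserving Measure.quasiMeasurePreserving_fst
  have hmemD : ∀ᵐ p ∂ μ.prod ν, p.2 ∈ D := by
    rw [ae_iff]
    have hsub : {p : ℝ × EuclideanSpace ℝ (Fin 3) | ¬ p.2 ∈ D} ⊆ Set.univ ×ˢ Dᶜ := by
      intro p hp; exact ⟨trivial, hp⟩
    refine measure_mono_null hsub ?_
    rw [Measure.prod_prod]
    simp [hν, Measure.restrict_apply (MeasurableSet.compl hD)]
  haveI : IsFiniteMeasure ν := ⟨by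
    rw [hν, Measure.restrict_apply_univ]; exact hDb.measure_lt_top⟩
  have hFint : Integrable F (μ.prod ν) := by
    refine Integrable.mono' (g := fun p => ‖φ p.1‖ * M) ?_ hFmeas ?_
    · exact (hφ.norm).mul_prod (integrable_const M)
    · filter_upwards [hmemD] with p hp
      have h1 : ‖Complex.exp (-(Complex.I * (t - p.1) * (⟪xhat, p.2⟫ : ℝ)))‖ = 1 := by
        rw [Complex.norm_exp]
        simp [Complex.exp_re]
      simp only [F, norm_mul, h1, one_mul]
      rw [mul_comm (‖f p.2‖)]
      exact mul_le_mul_of_nonneg_left (hM p.2 hp) (norm_nonneg _)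
  calc (∫ s in Set.Ioc (0:ℝ) kmax,
        (∫ y in D, Complex.exp (-(Complex.I * (t - s) * (⟪xhat, y⟫ : ℝ))) * f y) * φ s)
      = ∫ s, ∫ y, F (s, y) ∂ν ∂μ := by
        refine integral_congr_ae (Filter.Eventually.of_forall fun s => ?_)
        exact (integral_mul_const (φ s)
          (fun y => Complex.exp (-(Complex.I * (t - s) * ((⟪xhat, y⟫ : ℝ) : ℂ))) * f y)).symm
    _ = ∫ y, ∫ s, F (s, y) ∂μ ∂ν := integral_integral_swap hFint
    _ = ∫ y in D, Complex.exp (-(Complex.I * t * (⟪xhat, y⟫ : ℝ))) * f y *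
        (∫ s in Set.Ioc (0:ℝ) kmax, Complex.exp (Complex.I * s * (⟪xhat, y⟫ : ℝ)) * φ s) := by
        refine integral_congr_ae (Filter.Eventually.of_forall fun y => ?_)
        have key : ∀ s : ℝ, F (s, y)
            = (Complex.exp (-(Complex.I * t * ((⟪xhat, y⟫ : ℝ) : ℂ))) * f y) *
              (Complex.exp (Complex.I * s * ((⟪xhat, y⟫ : ℝ) : ℂ)) * φ s) := fun s => by
          simp only [F]
          rw [show -(Complex.I * ((t : ℂ) - s) * ((⟪xhat, y⟫ : ℝ) : ℂ)) =
            -(Complex.I * t * ((⟪xhat, y⟫ : ℝ) : ℂ)) + Complex.I * s * ((⟪xhat, y⟫ : ℝ) : ℂ)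
            by ring, Complex.exp_add]
          ring
        show (∫ s, F (s, y) ∂μ) = _
        rw [integral_congr_ae (Filter.Eventually.of_forall key), integral_const_mul]
end
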